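/- Let μ > 0 and α > 0 be real numbers. Then the Gompertz density integrates to one: ∫₀^∞ μ exp(α t) exp(-(μ/α)(exp(α t) - 1)) dt = 1. -/

import Mathlib

open Real MeasureTheory

/-- The Gompertz density with positive shape `α > 0` integrates to one. -/
theorem gompertz_integral_eq_one (μ α : ℝ) (hμ : 0 < μ) (hα : 0 < α) :
    (∫ t in Set.Ioi (0 : ℝ),
        μ * Real.exp (α * t) * Real.exp (-(μ / α) * (Real.exp (α * t) - 1)))
      = 1 := by
  set F : ℝ → ℝ := fun t => -Real.exp (-(μ / α) * (Real.exp (α * t) - 1)) with hF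
  have hderiv : ∀ x ∈ Set.Ioi (0 : ℝ), HasDerivAt F
      (μ * Real.exp (α * x) * Real.exp (-(μ / α) * (Real.exp (α * x) - 1))) x := by
    intro x _
    have h1 : HasDerivAt (fun t : ℝ => α * t) α x := by
      simpa using (hasDerivAt_id x).const_mul α
    have h2 : HasDerivAt (fun t : ℝ => Real.exp (α * t)) (Real.exp (α * x) * α) x :=
      (Real.hasDerivAt_exp _).comp x h1
    have h3 : HasDerivAt (fun t : ℝ => -(μ / α) * (Real.exp (α * t) - 1))
        (-(μ / α) * (Real.exp (α * x) * α)) x := ((h2.sub_const 1).const_mul _)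
    have h4 : HasDerivAt (fun t : ℝ => Real.exp (-(μ / α) * (Real.exp (α * t) - 1)))
        (Real.exp (-(μ / α) * (Real.exp (α * x) - 1)) * (-(μ / α) * (Real.exp (α * x) * α))) x :=
      (Real.hasDerivAt_exp _).comp x h3
    have := h4.neg
    refine this.congr_deriv ?_
    field_simp
  have hcont : ContinuousWithinAt F (Set.Ici (0 : ℝ)) 0 := by
    apply Continuous.continuousWithinAt
    continuity
  have hnonneg : ∀ x ∈ Set.Ioi (0 : ℝ),
      0 ≤ μ * Real.exp (α * x) * Real.exp (-(μ / α) * (Real.exp (α * x) - 1)) := by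
    intro x _
    positivity
  have htend : Filter.Tendsto F Filter.atTop (nhds 0) := by
    have hg : Filter.Tendsto (fun t : ℝ => -(μ / α) * (Real.exp (α * t) - 1))
        Filter.atTop Filter.atBot := by
      have h1 : Filter.Tendsto (fun t : ℝ => Real.exp (α * t) - 1) Filter.atTop Filter.atTop := by
        have := Filter.tendsto_atTop_add_const_right Filter.atTop (-1 : ℝ)
          (Real.tendsto_exp_atTop.comp (Filter.tendsto_id.const_mul_atTop hα))
        exact this.congr (fun x => by simp [sub_eq_add_neg])
      exact h1.const_mul_atTop_of_neg (neg_lt_zero.mpr (by positivity))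
    have h2 := (Real.tendsto_exp_atBot.comp hg).neg
    simpa [hF, Function.comp] using h2
  have := MeasureTheory.integral_Ioi_of_hasDerivAt_of_nonneg hcont hderiv hnonneg htend
  rw [this]
  simp [hF]
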